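/- Let ρ be a density operator on a finite-dimensional Hilbert space and (Π, I−Π) a two-outcome projective measurement with tr(Πρ) ≥ 1 − ε. Let ρ' = ΠρΠ/tr(Πρ). Then the trace distance δ(ρ, ρ') = (1/2)·tr|ρ − ρ'| is at most 2√ε. -/

import Mathlib

open ComplexOrder
noncomputable section

/-- The trace norm `tr|A| = tr √(AᴴA)` of a matrix. -/
def psdSqrtOld {n : ℕ} {A : Matrix (Fin n) (Fin n) ℂ} (hA : A.PosSemidef) :
    Matrix (Fin n) (Fin n) ℂ :=
  (hA.1.eigenvectorUnitary : Matrix (Fin n) (Fin n) ℂ) *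
    Matrix.diagonal ((↑) ∘ (√·) ∘ hA.1.eigenvalues) *
    (star hA.1.eigenvectorUnitary : Matrix (Fin n) (Fin n) ℂ)

def traceNormM {d : ℕ} (A : Matrix (Fin d) (Fin d) ℂ) : ℝ :=
  ((psdSqrtOld (Matrix.posSemidef_conjTranspose_mul_self A)).trace).re

/-- The trace distance `δ(ρ, σ) = (1/2)·tr|ρ - σ|`. -/
def traceDist {d : ℕ} (ρ σ : Matrix (Fin d) (Fin d) ℂ) : ℝ :=
  (1 / 2) * traceNormM (ρ - σ)

end

open Matrix
set_option maxHeartbeats 1000000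

open scoped MatrixOrder in
lemma psdSqrtOld_eq {n : ℕ} {A : Matrix (Fin n) (Fin n) ℂ} (hA : A.PosSemidef) :
    psdSqrtOld hA = CFC.sqrt A := by
  have hA0 : 0 ≤ A := hA.nonneg
  rw [CFC.sqrt_eq_cfc, cfc_nnreal_eq_real _ A, hA.1.cfc_eq]
  simp only [IsHermitian.cfc, Unitary.conjStarAlgAut_apply, psdSqrtOld]
  congr 3
  funext i
  simp [max_eq_left (hA.eigenvalues_nonneg i)]

noncomputable def Matrix.PosSemidef.sqrt {n : ℕ} {A : Matrix (Fin n) (Fin n) ℂ}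
    (hA : A.PosSemidef) : Matrix (Fin n) (Fin n) ℂ :=
  psdSqrtOld hA

open scoped MatrixOrder in
lemma Matrix.PosSemidef.posSemidef_sqrt {n : ℕ} {A : Matrix (Fin n) (Fin n) ℂ}
    (hA : A.PosSemidef) : hA.sqrt.PosSemidef := by
  rw [Matrix.PosSemidef.sqrt, psdSqrtOld_eq]
  exact Matrix.nonneg_iff_posSemidef.mp (CFC.sqrt_nonneg A)

open scoped MatrixOrder in
lemma Matrix.PosSemidef.sqrt_mul_self {n : ℕ} {A : Matrix (Fin n) (Fin n) ℂ}
    (hA : A.PosSemidef) : hA.sqrt * hA.sqrt = A := by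
  rw [Matrix.PosSemidef.sqrt, psdSqrtOld_eq]
  exact CFC.sqrt_mul_sqrt_self A hA.nonneg

open scoped MatrixOrder in
lemma Matrix.PosSemidef.eq_sqrt_of_sq_eq {n : ℕ} {B : Matrix (Fin n) (Fin n) ℂ}
    (hB : B.PosSemidef) (A : Matrix (Fin n) (Fin n) ℂ) {hA : A.PosSemidef} (h : B ^ 2 = A) :
    B = psdSqrtOld hA := by
  rw [psdSqrtOld_eq, eq_comm, CFC.sqrt_eq_iff A B hA.nonneg hB.nonneg, ← h, sq]

lemma trace_nonneg_of_psd {d : ℕ} {A : Matrix (Fin d) (Fin d) ℂ} (hA : A.PosSemidef) :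
    0 ≤ A.trace := by
  exact hA.trace_nonneg

lemma trace_mul_nonneg {d : ℕ} {A B : Matrix (Fin d) (Fin d) ℂ}
    (hA : A.PosSemidef) (hB : B.PosSemidef) : 0 ≤ (A * B).trace := by
  have h1 : A * B = hA.sqrt * (hA.sqrt * B) := by rw [← mul_assoc, hA.sqrt_mul_self]
  rw [h1, Matrix.trace_mul_comm]
  have h2 : (hA.sqrt * B * hA.sqrt).PosSemidef := by
    have := hB.mul_mul_conjTranspose_same hA.sqrt
    rwa [hA.posSemidef_sqrt.isHermitian.eq] at this
  exact trace_nonneg_of_psd h2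

-- Cauchy-Schwarz for the trace inner product
lemma trace_CS {d : ℕ} (X Y : Matrix (Fin d) (Fin d) ℂ) :
    (Xᴴ * Y).trace.re ≤ Real.sqrt (Xᴴ * X).trace.re * Real.sqrt (Yᴴ * Y).trace.re := by
  have htr : ∀ Z : Matrix (Fin d) (Fin d) ℂ,
      (Xᴴ * Z).trace = ∑ j, ∑ i, (starRingEnd ℂ) (X i j) * Z i j := by
    intro Z
    simp [Matrix.trace, Matrix.mul_apply, Matrix.diag, Matrix.conjTranspose_apply]
  have hGram : ∀ Z : Matrix (Fin d) (Fin d) ℂ,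
      (Zᴴ * Z).trace.re = ∑ j, ∑ i, ‖Z i j‖ ^ 2 := by
    intro Z
    have h : (Zᴴ * Z).trace = ∑ j, ∑ i, (starRingEnd ℂ) (Z i j) * Z i j := by
      simp [Matrix.trace, Matrix.mul_apply, Matrix.diag, Matrix.conjTranspose_apply]
    rw [h, Complex.re_sum]
    refine Finset.sum_congr rfl fun j _ => ?_
    rw [Complex.re_sum]
    refine Finset.sum_congr rfl fun i _ => ?_
    rw [mul_comm, Complex.mul_conj']
    simp [← Complex.ofReal_pow, Complex.sq_norm]
  have e1 : ∀ f : Fin d → Fin d → ℝ,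
      ∑ p ∈ Finset.univ ×ˢ Finset.univ, f p.1 p.2 = ∑ j, ∑ i, f j i := fun f =>
    Finset.sum_product' Finset.univ Finset.univ f
  calc (Xᴴ * Y).trace.re
      ≤ ∑ j, ∑ i, ‖X i j‖ * ‖Y i j‖ := by
        rw [htr Y, Complex.re_sum]
        refine Finset.sum_le_sum fun j _ => ?_
        rw [Complex.re_sum]
        refine Finset.sum_le_sum fun i _ => ?_
        calc ((starRingEnd ℂ) (X i j) * Y i j).re
            ≤ ‖(starRingEnd ℂ) (X i j) * Y i j‖ := Complex.re_le_norm _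
          _ = ‖X i j‖ * ‖Y i j‖ := by
              rw [norm_mul, Complex.norm_conj]
    _ ≤ Real.sqrt (∑ j, ∑ i, ‖X i j‖ ^ 2) *
        Real.sqrt (∑ j, ∑ i, ‖Y i j‖ ^ 2) := by
        rw [← e1 (fun j i => ‖X i j‖ * ‖Y i j‖),
          ← e1 (fun j i => ‖X i j‖ ^ 2),
          ← e1 (fun j i => ‖Y i j‖ ^ 2)]
        exact Real.sum_mul_le_sqrt_mul_sqrt _ _ _
    _ = Real.sqrt (Xᴴ * X).trace.re * Real.sqrt (Yᴴ * Y).trace.re := by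
        rw [hGram X, hGram Y]

lemma sandwich_mul {d : ℕ} {U : Matrix (Fin d) (Fin d) ℂ} (hU : star U * U = 1)
    (D₁ D₂ : Matrix (Fin d) (Fin d) ℂ) :
    (U * D₁ * star U) * (U * D₂ * star U) = U * (D₁ * D₂) * star U := by
  simp only [mul_assoc]
  rw [← mul_assoc (star U) U, hU, one_mul]

lemma trace_sandwich {d : ℕ} {U : Matrix (Fin d) (Fin d) ℂ} (hU : star U * U = 1)
    (D : Matrix (Fin d) (Fin d) ℂ) : (U * D * star U).trace = D.trace := by
  rw [Matrix.trace_mul_cycle, hU, one_mul]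


/-- Gentle measurement (Winter 1999): if `ρ` is a density operator, `(P, I - P)` a
two-outcome projective measurement with `tr(Pρ) ≥ 1 - ε` (`ε ∈ [0,1)`), and
`ρ' = PρP/tr(Pρ)` the post-selected state, then `δ(ρ, ρ') ≤ 2√ε`. -/
theorem stmt_19 (d : ℕ) (ρ P : Matrix (Fin d) (Fin d) ℂ) (ε : ℝ)
    (hρ : ρ.PosSemidef) (htr : ρ.trace = 1)
    (hherm : P.IsHermitian) (hproj : P * P = P)
    (hε : 0 ≤ ε) (hε1 : ε < 1)
    (hmeas : 1 - ε ≤ ((P * ρ).trace).re) :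
    traceDist ρ (((P * ρ).trace)⁻¹ • (P * ρ * P)) ≤ 2 * Real.sqrt ε := by
  classical
  set q : ℂ := (P * ρ).trace with hqdef
  set pr : ℝ := q.re with hprdef
  have hPcH : (1 - P)ᴴ = 1 - P := by
    rw [conjTranspose_sub, conjTranspose_one, hherm.eq]
  have hPρP : (P * ρ * P).PosSemidef := by
    have := hρ.mul_mul_conjTranspose_same P; rwa [hherm.eq] at this
  have hPcρPc : ((1 - P) * ρ * (1 - P)).PosSemidef := by
    have := hρ.mul_mul_conjTranspose_same (1 - P); rwa [hPcH] at this
  have htrPρP : (P * ρ * P).trace = q := by rw [Matrix.trace_mul_cycle, hproj]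
  have hq_nonneg : 0 ≤ q := htrPρP ▸ trace_nonneg_of_psd hPρP
  have hq_im : q.im = 0 := ((Complex.le_def.mp hq_nonneg).2).symm
  have hq_eq : q = (pr : ℂ) := Complex.ext (by simp [hprdef]) (by simp [hq_im])
  have hpr_pos : 0 < pr := lt_of_lt_of_le (by linarith) hmeas
  have hq_ne : q ≠ 0 := by
    rw [hq_eq]; exact_mod_cast hpr_pos.ne'
  have htrPc : ((1 - P) * ρ * (1 - P)).trace = 1 - q := by
    have expand : (1 - P) * ρ * (1 - P) = ρ - P * ρ - ρ * P + P * ρ * P := by noncomm_ring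
    rw [expand, Matrix.trace_add, Matrix.trace_sub, Matrix.trace_sub, htr,
      Matrix.trace_mul_comm ρ P, htrPρP]
    ring
  have hPc_tr_nonneg : 0 ≤ (1 : ℂ) - q := htrPc ▸ trace_nonneg_of_psd hPcρPc
  have hpr_le1 : pr ≤ 1 := by
    have := (Complex.le_def.mp hPc_tr_nonneg).1; simp at this; linarith
  have hgap : 1 - pr ≤ ε := by linarith [hmeas]
  -- the difference matrix
  set M : Matrix (Fin d) (Fin d) ℂ := ρ - q⁻¹ • (P * ρ * P) with hMdef
  have hρ'H : (q⁻¹ • (P * ρ * P)).IsHermitian := by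
    show _ = _
    rw [conjTranspose_smul, hPρP.isHermitian.eq, hq_eq]
    norm_num [← Complex.ofReal_inv, Complex.conj_ofReal]
  have hMH : M.IsHermitian := hρ.isHermitian.sub hρ'H
  have hMtr : M.trace = 0 := by
    rw [hMdef, Matrix.trace_sub, Matrix.trace_smul, htrPρP, htr, smul_eq_mul,
      inv_mul_cancel₀ hq_ne]
    ring
  -- spectral decomposition of M
  set U : Matrix (Fin d) (Fin d) ℂ := (hMH.eigenvectorUnitary : Matrix (Fin d) (Fin d) ℂ)
    with hUdef
  set lam : Fin d → ℝ := hMH.eigenvalues with hlamdef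
  have hU : star U * U = 1 := Matrix.mem_unitaryGroup_iff'.mp hMH.eigenvectorUnitary.2
  have hU' : U * star U = 1 := Matrix.mem_unitaryGroup_iff.mp hMH.eigenvectorUnitary.2
  have hspec : M = U * Matrix.diagonal (fun i => (lam i : ℂ)) * star U := hMH.spectral_theorem
  -- the absolute value matrix S
  set S : Matrix (Fin d) (Fin d) ℂ :=
    U * Matrix.diagonal (fun i => ((|lam i| : ℝ) : ℂ)) * star U with hSdef
  have hS_psd : S.PosSemidef := by
    have hd : (Matrix.diagonal (fun i => ((|lam i| : ℝ) : ℂ))).PosSemidef :=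
      Matrix.posSemidef_diagonal_iff.mpr fun i => by
        rw [Complex.zero_le_real]; exact abs_nonneg _
    have := hd.mul_mul_conjTranspose_same U
    rwa [← Matrix.star_eq_conjTranspose] at this
  have hS_sq : S ^ 2 = Mᴴ * M := by
    have hdd : (Matrix.diagonal fun i => ((|lam i| : ℝ) : ℂ) * ((|lam i| : ℝ) : ℂ))
        = Matrix.diagonal fun i => (lam i : ℂ) * (lam i : ℂ) := by
      have hfun : (fun i : Fin d => ((|lam i| : ℝ) : ℂ) * ((|lam i| : ℝ) : ℂ))
          = fun i => (lam i : ℂ) * (lam i : ℂ) := by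
        funext i
        rw [← Complex.ofReal_mul, ← Complex.ofReal_mul, abs_mul_abs_self]
      rw [hfun]
    rw [hMH.eq, pow_two, hSdef, sandwich_mul hU, hspec, sandwich_mul hU,
      Matrix.diagonal_mul_diagonal, Matrix.diagonal_mul_diagonal, hdd]
  have hSsqrt : S = psdSqrtOld (Matrix.posSemidef_conjTranspose_mul_self M) :=
    hS_psd.eq_sqrt_of_sq_eq _ hS_sq
  have hnorm : traceNormM M = ∑ i, |lam i| := by
    rw [traceNormM, ← hSsqrt, hSdef, trace_sandwich hU, Matrix.trace_diagonal]
    rw [Complex.re_sum]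
    simp
  -- positive-part projection Q
  set ind : Fin d → ℂ := fun i => if 0 ≤ lam i then 1 else 0 with hinddef
  set Q : Matrix (Fin d) (Fin d) ℂ := U * Matrix.diagonal ind * star U with hQdef
  have hQ_psd : Q.PosSemidef := by
    have hd : (Matrix.diagonal ind).PosSemidef :=
      Matrix.posSemidef_diagonal_iff.mpr fun i => by
        by_cases h : 0 ≤ lam i <;> simp [hinddef, h]
    have := hd.mul_mul_conjTranspose_same U
    rwa [← Matrix.star_eq_conjTranspose] at this
  have hQH : Qᴴ = Q := hQ_psd.1
  have hQQ : Q * Q = Q := by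
    rw [hQdef, sandwich_mul hU, Matrix.diagonal_mul_diagonal]
    have hfun : (fun i => ind i * ind i) = ind := by
      funext i
      by_cases h : 0 ≤ lam i <;> simp [hinddef, h]
    rw [hfun]
  have h1Q_psd : (1 - Q).PosSemidef := by
    have hdiag : Matrix.diagonal (fun i => 1 - ind i)
        = 1 - Matrix.diagonal ind := by
      ext i j
      by_cases hij : i = j <;> simp [Matrix.diagonal_apply, Matrix.one_apply, hij]
    have h1 : (1 : Matrix (Fin d) (Fin d) ℂ) - Q
        = U * Matrix.diagonal (fun i => 1 - ind i) * star U := by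
      rw [hdiag, Matrix.mul_sub, Matrix.mul_one, Matrix.sub_mul, hU', hQdef]
    rw [h1]
    have hd : (Matrix.diagonal (fun i => 1 - ind i)).PosSemidef :=
      Matrix.posSemidef_diagonal_iff.mpr fun i => by
        by_cases h : 0 ≤ lam i <;> simp [hinddef, h]
    have := hd.mul_mul_conjTranspose_same U
    rwa [← Matrix.star_eq_conjTranspose] at this
  have hQM : (Q * M).trace = ∑ i, if 0 ≤ lam i then (lam i : ℂ) else 0 := by
    rw [hQdef, hspec, sandwich_mul hU, Matrix.diagonal_mul_diagonal, trace_sandwich hU,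
      Matrix.trace_diagonal]
    refine Finset.sum_congr rfl fun i _ => ?_
    by_cases h : 0 ≤ lam i <;> simp [hinddef, h]
  have hsum0 : ∑ i, lam i = 0 := by
    have h : M.trace = ∑ i, (lam i : ℂ) := by
      rw [hspec, trace_sandwich hU, Matrix.trace_diagonal]
    rw [hMtr] at h
    exact_mod_cast h.symm
  have htd : traceDist ρ (q⁻¹ • (P * ρ * P)) = (Q * M).trace.re := by
    rw [traceDist, hnorm]
    rw [hQM, Complex.re_sum]
    have hterm : ∀ i : Fin d,
        ((if 0 ≤ lam i then (lam i : ℂ) else 0)).re = if 0 ≤ lam i then lam i else 0 := by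
      intro i
      by_cases h : 0 ≤ lam i <;> simp [h]
    simp only [hterm]
    have habs : ∀ i : Fin d, |lam i| = 2 * (if 0 ≤ lam i then lam i else 0) - lam i := by
      intro i
      by_cases h : 0 ≤ lam i
      · simp [h, abs_of_nonneg h]; ring
      · simp [h, abs_of_neg (lt_of_not_ge h)]
    rw [Finset.sum_congr rfl fun i _ => habs i, Finset.sum_sub_distrib, hsum0,
      ← Finset.mul_sum]
    ring
  rw [htd]
  -- square root of ρ
  set R : Matrix (Fin d) (Fin d) ℂ := hρ.sqrt with hRdef
  have hRH : Rᴴ = R := hρ.posSemidef_sqrt.1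
  have hRR : R * R = ρ := hρ.sqrt_mul_self
  -- trace splitting
  set T1c : ℂ := (Q * ((1 - P) * ρ)).trace with hT1def
  set T2c : ℂ := (Q * (P * ρ * (1 - P))).trace with hT2def
  set T3c : ℂ := (Q * (P * ρ * P)).trace with hT3def
  have hQρ : (Q * ρ).trace = T1c + T2c + T3c := by
    have h : Q * ρ = Q * ((1 - P) * ρ) + Q * (P * ρ * (1 - P)) + Q * (P * ρ * P) := by
      noncomm_ring
    rw [h, Matrix.trace_add, Matrix.trace_add]
  have hQMtr : (Q * M).trace = T1c + T2c + (1 - q⁻¹) * T3c := by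
    rw [hMdef, Matrix.mul_sub, Matrix.trace_sub, Matrix.mul_smul, Matrix.trace_smul,
      smul_eq_mul, hQρ, ← hT3def]
    ring
  -- T3c is a nonnegative real, ≤ pr
  have hT3_nonneg : 0 ≤ T3c := trace_mul_nonneg hQ_psd hPρP
  have hT3_im : T3c.im = 0 := ((Complex.le_def.mp hT3_nonneg).2).symm
  have hT3_re_nonneg : 0 ≤ T3c.re := (Complex.le_def.mp hT3_nonneg).1
  have hT3_le : T3c.re ≤ pr := by
    have h0 := trace_mul_nonneg h1Q_psd hPρP
    have hdiff : ((1 - Q) * (P * ρ * P)).trace = q - T3c := by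
      rw [Matrix.sub_mul, Matrix.trace_sub, Matrix.one_mul, htrPρP, hT3def]
    rw [hdiff] at h0
    have := (Complex.le_def.mp h0).1
    simp only [Complex.sub_re, Complex.zero_re] at this
    linarith
  -- the cross terms via Cauchy-Schwarz
  have hPcmono : (Q * ((1 - P) * ρ * (1 - P))).trace.re ≤ 1 - pr := by
    have h0 := trace_mul_nonneg h1Q_psd hPcρPc
    have hdiff : ((1 - Q) * ((1 - P) * ρ * (1 - P))).trace
        = (1 - q) - (Q * ((1 - P) * ρ * (1 - P))).trace := by
      rw [Matrix.sub_mul, Matrix.trace_sub, Matrix.one_mul, htrPc]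
    rw [hdiff] at h0
    have := (Complex.le_def.mp h0).1
    simp only [Complex.sub_re, Complex.zero_re, Complex.one_re] at this
    have hqre : q.re = pr := rfl
    linarith
  have hT1_bound : T1c.re ≤ Real.sqrt ε := by
    have e1 : (R * ((1 - P) * Q))ᴴ * R = Q * ((1 - P) * ρ) := by
      rw [Matrix.conjTranspose_mul, Matrix.conjTranspose_mul, hRH, hQH, hPcH, ← hRR]
      noncomm_ring
    have eXX : (R * ((1 - P) * Q))ᴴ * (R * ((1 - P) * Q))
        = Q * ((1 - P) * ρ * (1 - P)) * Q := by
      rw [Matrix.conjTranspose_mul, Matrix.conjTranspose_mul, hRH, hQH, hPcH, ← hRR]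
      noncomm_ring
    have eYY : Rᴴ * R = ρ := by rw [hRH, hRR]
    have hcs := trace_CS (R * ((1 - P) * Q)) R
    rw [e1, eXX, eYY, htr] at hcs
    have hcyc : (Q * ((1 - P) * ρ * (1 - P)) * Q).trace
        = (Q * ((1 - P) * ρ * (1 - P))).trace := by
      rw [Matrix.trace_mul_comm (Q * ((1 - P) * ρ * (1 - P))) Q, ← Matrix.mul_assoc, hQQ]
    rw [hcyc] at hcs
    calc T1c.re ≤ Real.sqrt (Q * ((1 - P) * ρ * (1 - P))).trace.re
          * Real.sqrt (1 : ℂ).re := hcs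
      _ ≤ Real.sqrt ε * 1 := by
          simp only [Complex.one_re, Real.sqrt_one]
          gcongr
          · linarith
      _ = Real.sqrt ε := by ring
  have hT2_bound : T2c.re ≤ Real.sqrt ε := by
    have e2 : (R * (P * Q))ᴴ * (R * (1 - P)) = Q * (P * ρ * (1 - P)) := by
      rw [Matrix.conjTranspose_mul, Matrix.conjTranspose_mul, hRH, hQH, hherm.eq, ← hRR]
      noncomm_ring
    have eXX : (R * (P * Q))ᴴ * (R * (P * Q)) = Q * (P * ρ * P) * Q := by
      rw [Matrix.conjTranspose_mul, Matrix.conjTranspose_mul, hRH, hQH, hherm.eq, ← hRR]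
      noncomm_ring
    have eYY : (R * (1 - P))ᴴ * (R * (1 - P)) = (1 - P) * ρ * (1 - P) := by
      rw [Matrix.conjTranspose_mul, hRH, hPcH, ← hRR]
      noncomm_ring
    have hcs := trace_CS (R * (P * Q)) (R * (1 - P))
    rw [e2, eXX, eYY, htrPc] at hcs
    have hcyc : (Q * (P * ρ * P) * Q).trace = T3c := by
      rw [Matrix.trace_mul_comm (Q * (P * ρ * P)) Q, ← Matrix.mul_assoc, hQQ, hT3def]
    rw [hcyc] at hcs
    have h1q : ((1 : ℂ) - q).re = 1 - pr := by
      simp [Complex.sub_re, hprdef]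
    rw [h1q] at hcs
    calc T2c.re ≤ Real.sqrt T3c.re * Real.sqrt (1 - pr) := hcs
      _ ≤ 1 * Real.sqrt ε := by
          have h1 : Real.sqrt T3c.re ≤ 1 := Real.sqrt_le_one.mpr (by linarith)
          have h2 : Real.sqrt (1 - pr) ≤ Real.sqrt ε := Real.sqrt_le_sqrt (by linarith)
          exact mul_le_mul h1 h2 (Real.sqrt_nonneg _) (by norm_num)
      _ = Real.sqrt ε := by ring
  -- the scalar term is nonpositive
  have hinv_ge : 1 ≤ pr⁻¹ := by
    have h1 : pr * pr⁻¹ = 1 := mul_inv_cancel₀ hpr_pos.ne'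
    nlinarith [mul_nonneg (inv_nonneg.mpr hpr_pos.le) (sub_nonneg.mpr hpr_le1)]
  have hterm3 : ((1 - q⁻¹) * T3c).re ≤ 0 := by
    have hq_inv : q⁻¹ = ((pr⁻¹ : ℝ) : ℂ) := by rw [hq_eq, ← Complex.ofReal_inv]
    have : ((1 - q⁻¹) * T3c).re = (1 - pr⁻¹) * T3c.re := by
      rw [hq_inv]
      have : (1 : ℂ) - ((pr⁻¹ : ℝ) : ℂ) = (((1 - pr⁻¹ : ℝ)) : ℂ) := by push_cast; ring
      rw [this, Complex.re_ofReal_mul]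
    rw [this]
    exact mul_nonpos_of_nonpos_of_nonneg (by linarith) hT3_re_nonneg
  have : (Q * M).trace.re = T1c.re + T2c.re + ((1 - q⁻¹) * T3c).re := by
    rw [hQMtr]
    simp [Complex.add_re]
  rw [this]
  have hsq : 0 ≤ Real.sqrt ε := Real.sqrt_nonneg ε
  linarith
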